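/- Let a reaction network N be given by α, β ∈ ℕ^{n×ν} with Γ = β − α, admissible Jacobian set 𝒦, and r = rank Γ. Assume N has no catalytic reactions (for all i, j, not both α_{ij} > 0 and β_{ij} > 0). Fix a species i and let Ñ be obtained from N by adding a catalyst X_i⁻: Ñ has n+1 species and the same ν reactions, where rows 1,…,n of α̃ and β̃ equal those of α and β, row n+1 of α̃ equals row i of β, and row n+1 of β̃ equals row i of α. Set Γ̃ = β̃ − α̃, r̃ = rank Γ̃, and let 𝒦̃ be the admissible Jacobian set of Ñ. Assume: N is robustly P0; N is robustly non-degenerate; and Ñ is robustly P0. Then Ñ is robustly non-degenerate: for every Ṽ ∈ 𝒦̃ the sum of all r̃×r̃ principal minors of −Γ̃Ṽ is nonzero. -/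

import Mathlib

open Matrix Finset

/-- The principal minor of a square matrix `M` indexed by the set `I`. -/
noncomputable def principalMinor {n : ℕ} (M : Matrix (Fin n) (Fin n) ℝ) (I : Finset (Fin n)) : ℝ :=
  (M.submatrix (fun i : {x // x ∈ I} => (i : Fin n)) (fun i : {x // x ∈ I} => (i : Fin n))).det

/-- The sum of all `r × r` principal minors of the square matrix `M`. -/
noncomputable def sumMinors {n : ℕ} (r : ℕ) (M : Matrix (Fin n) (Fin n) ℝ) : ℝ :=
  ∑ I ∈ Finset.univ.powersetCard r, principalMinor M I

/-- The admissible Jacobian set: `V j i > 0` whenever `X i` is a reactant of reaction `j`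
    (i.e. `α i j > 0`) and `V j i = 0` otherwise. -/
def admissible {n ν : ℕ} (α : Matrix (Fin n) (Fin ν) ℕ) (V : Matrix (Fin ν) (Fin n) ℝ) : Prop :=
  ∀ i j, (0 < α i j → 0 < V j i) ∧ (α i j = 0 → V j i = 0)

/-- The stoichiometry matrix `Γ = β - α` (entries cast to `ℝ`). -/
def gam {n ν : ℕ} (α β : Matrix (Fin n) (Fin ν) ℕ) : Matrix (Fin n) (Fin ν) ℝ :=
  fun i j => (β i j : ℝ) - (α i j : ℝ)

/-- Robust non-degeneracy is preserved by adding a catalyst species `X i⁻`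
(a product exactly where `X i` is a reactant and vice versa), for robustly `P₀`
networks without catalytic reactions. -/
theorem nondeg_add_catalyst (n ν : ℕ) (α β : Matrix (Fin n) (Fin ν) ℕ)
    (hcat : ∀ i j, ¬(0 < α i j ∧ 0 < β i j))
    (i0 : Fin n)
    (αt βt : Matrix (Fin (n + 1)) (Fin ν) ℕ)
    (hαold : ∀ (i : Fin n) (j : Fin ν), αt i.castSucc j = α i j)
    (hβold : ∀ (i : Fin n) (j : Fin ν), βt i.castSucc j = β i j)
    (hαnew : ∀ j : Fin ν, αt (Fin.last n) j = β i0 j)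
    (hβnew : ∀ j : Fin ν, βt (Fin.last n) j = α i0 j)
    (hP0 : ∀ V, admissible α V → ∀ I : Finset (Fin n),
      0 ≤ principalMinor (-(gam α β * V)) I)
    (hND : ∀ V, admissible α V →
      sumMinors (gam α β).rank (-(gam α β * V)) ≠ 0)
    (hP0t : ∀ V, admissible αt V → ∀ I : Finset (Fin (n + 1)),
      0 ≤ principalMinor (-(gam αt βt * V)) I) :
    ∀ V, admissible αt V →
      sumMinors (gam αt βt).rank (-(gam αt βt * V)) ≠ 0 := by
  intro Vt hVt
  -- rows of the extended stoichiometry matrix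
  have hΓt : ∀ (i : Fin n) (j : Fin ν), gam αt βt i.castSucc j = gam α β i j := by
    intro i j; simp [gam, hαold, hβold]
  have hΓtlast : ∀ j, gam αt βt (Fin.last n) j = -(gam α β i0 j) := by
    intro j; simp [gam, hαnew, hβnew]
  -- rank equality
  have hrank : (gam αt βt).rank = (gam α β).rank := by
    apply le_antisymm
    · have hfac : gam αt βt =
        (Matrix.of fun (i : Fin (n+1)) (k : Fin n) =>
          (Fin.lastCases (fun k => if k = i0 then (-1:ℝ) else 0)
            (fun i' k => if k = i' then (1:ℝ) else 0) i : Fin n → ℝ) k) * gam α β := by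
        ext i j
        refine Fin.lastCases ?_ (fun i' => ?_) i
        · rw [hΓtlast]
          simp [Matrix.mul_apply, ite_mul]
        · rw [hΓt]
          simp [Matrix.mul_apply, ite_mul]
      rw [hfac]
      exact Matrix.rank_mul_le_right _ _
    · have hfac : gam α β =
        (Matrix.of fun (i : Fin n) (k : Fin (n+1)) =>
          if k = i.castSucc then (1:ℝ) else 0) * gam αt βt := by
        ext i j
        simp [Matrix.mul_apply, ite_mul, hΓt]
      rw [hfac]
      exact Matrix.rank_mul_le_right _ _
  -- restriction of Vt to old species
  set V : Matrix (Fin ν) (Fin n) ℝ := fun j i => Vt j i.castSucc with hVdef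
  have hV : admissible α V := by
    intro i j
    have h := hVt i.castSucc j
    rw [hαold] at h
    exact h
  -- top-left block
  have hblock : ∀ (a b : Fin n),
      (-(gam αt βt * Vt)) a.castSucc b.castSucc = (-(gam α β * V)) a b := by
    intro a b
    simp only [Matrix.neg_apply, Matrix.mul_apply, neg_inj]
    exact Finset.sum_congr rfl fun j _ => by rw [hΓt]
  -- embedding
  set emb : Fin n ↪ Fin (n+1) := ⟨Fin.castSucc, Fin.castSucc_injective n⟩ with hemb
  have hpm : ∀ I : Finset (Fin n),
      principalMinor (-(gam αt βt * Vt)) (I.map emb) = principalMinor (-(gam α β * V)) I := by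
    intro I
    unfold principalMinor
    have hbij : Function.Bijective (fun x : {x // x ∈ I} =>
        (⟨emb x.1, Finset.mem_map_of_mem _ x.2⟩ : {y // y ∈ I.map emb})) := by
      constructor
      · intro a b hab
        exact Subtype.ext (emb.injective (congrArg Subtype.val hab))
      · rintro ⟨y, hy⟩
        obtain ⟨x, hx, rfl⟩ := Finset.mem_map.mp hy
        exact ⟨⟨x, hx⟩, rfl⟩
    rw [← Matrix.det_submatrix_equiv_self (Equiv.ofBijective _ hbij)]
    congr 1
    ext a b
    simp only [Matrix.submatrix_apply, Equiv.ofBijective_apply]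
    exact hblock a.1 b.1
  set r := (gam α β).rank
  have hpos : 0 < sumMinors r (-(gam α β * V)) := by
    have h1 : 0 ≤ sumMinors r (-(gam α β * V)) :=
      Finset.sum_nonneg fun I _ => hP0 V hV I
    exact lt_of_le_of_ne h1 (Ne.symm (hND V hV))
  have hsub : ((Finset.univ : Finset (Fin n)).powersetCard r).image (fun I => I.map emb)
      ⊆ (Finset.univ : Finset (Fin (n+1))).powersetCard r := by
    intro J hJ
    obtain ⟨I, hI, rfl⟩ := Finset.mem_image.mp hJ
    rw [Finset.mem_powersetCard] at hI ⊢
    exact ⟨Finset.subset_univ _, by rw [Finset.card_map]; exact hI.2⟩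
  have hsum : sumMinors r (-(gam α β * V)) ≤ sumMinors r (-(gam αt βt * Vt)) := by
    unfold sumMinors
    calc ∑ I ∈ Finset.univ.powersetCard r, principalMinor (-(gam α β * V)) I
        = ∑ I ∈ Finset.univ.powersetCard r,
            principalMinor (-(gam αt βt * Vt)) (I.map emb) :=
          Finset.sum_congr rfl fun I _ => (hpm I).symm
      _ = ∑ J ∈ ((Finset.univ : Finset (Fin n)).powersetCard r).image (fun I => I.map emb),
            principalMinor (-(gam αt βt * Vt)) J := by
          rw [Finset.sum_image]
          intro a _ b _ hab
          exact Finset.map_injective emb hab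
      _ ≤ ∑ J ∈ Finset.univ.powersetCard r, principalMinor (-(gam αt βt * Vt)) J :=
          Finset.sum_le_sum_of_subset_of_nonneg hsub fun J _ _ => hP0t Vt hVt J
  rw [hrank]
  exact (hpos.trans_le hsum).ne'
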